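/- Let K be an algebraically closed field with a non-Archimedean absolute value, f : U → V a polynomial map of degree e ≥ 1 between disks, with e less than the residue characteristic of K if the latter is positive. Then e = C + 1, where C is the number of critical points of f in U counted with multiplicity. -/

import Mathlib

open Polynomial
open scoped Classical

/-- `D` is a disk (open or closed) of radius `r` for the absolute value `v`. -/
def IsDiskOfRadius {K : Type*} [Field K] (v : AbsoluteValue K ℝ) (D : Set K)
    (r : ℝ) : Prop :=
  0 < r ∧ ∃ a : K, D = {z : K | v (z - a) < r} ∨ D = {z : K | v (z - a) ≤ r}

/-- The number of preimages of `y` under `f` lying in `U`, counted with multiplicity. -/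
noncomputable def mapDegreeOn {K : Type*} [Field K] (f : K[X]) (U : Set K) (y : K) : ℕ :=
  Multiset.card (Multiset.filter (· ∈ U) ((f - C y).roots))

section RHAux

variable {K : Type*} [Field K] {v : AbsoluteValue K ℝ}

lemma na_natCast_le_one (hna : IsNonarchimedean ⇑v) : ∀ n : ℕ, v (n : K) ≤ 1
  | 0 => by simp
  | (n + 1) => by
    push_cast
    refine le_trans (hna _ _) (max_le (na_natCast_le_one hna n) ?_)
    simp

lemma na_add_eq (hna : IsNonarchimedean ⇑v) {x y : K} (h : v y < v x) :
    v (x + y) = v x := by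
  have h1 : v (x + y) ≤ v x := le_trans (hna x y) (max_le le_rfl h.le)
  have h2 : v x ≤ max (v (x + y)) (v y) := by
    have h3 := hna (x + y) (-y)
    rw [add_neg_cancel_right, v.map_neg] at h3
    exact h3
  have h4 : v x ≤ v (x + y) := by
    rcases le_max_iff.mp h2 with h5 | h5
    · exact h5
    · exact absurd h5 (not_le.mpr h)
  exact le_antisymm h1 h4

lemma na_sum_le (hna : IsNonarchimedean ⇑v) {ι : Type*} {t : Finset ι} {g : ι → K}
    {c M : ℝ} (hc : 0 ≤ c) (hM : 0 ≤ M) (h : ∀ i ∈ t, v (g i) * c ≤ M) :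
    v (∑ i ∈ t, g i) * c ≤ M := by
  induction t using Finset.cons_induction with
  | empty => simpa using hM
  | cons i t hit ih =>
    rw [Finset.sum_cons]
    refine le_trans ?_ (max_le (h i (Finset.mem_cons_self _ _))
      (ih fun j hj => h j (Finset.mem_cons_of_mem hj)))
    calc v (g i + ∑ j ∈ t, g j) * c ≤ max (v (g i)) (v (∑ j ∈ t, g j)) * c :=
          mul_le_mul_of_nonneg_right (hna _ _) hc
      _ = max (v (g i) * c) (v (∑ j ∈ t, g j) * c) := max_mul_of_nonneg _ _ hc

lemma na_sum_lt (hna : IsNonarchimedean ⇑v) {ι : Type*} {t : Finset ι} {g : ι → K}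
    {c M : ℝ} (hc : 0 ≤ c) (hM : 0 < M) (h : ∀ i ∈ t, v (g i) * c < M) :
    v (∑ i ∈ t, g i) * c < M := by
  induction t using Finset.cons_induction with
  | empty => simpa using hM
  | cons i t hit ih =>
    rw [Finset.sum_cons]
    refine lt_of_le_of_lt ?_ (max_lt (h i (Finset.mem_cons_self _ _))
      (ih fun j hj => h j (Finset.mem_cons_of_mem hj)))
    calc v (g i + ∑ j ∈ t, g j) * c ≤ max (v (g i)) (v (∑ j ∈ t, g j)) * c :=
          mul_le_mul_of_nonneg_right (hna _ _) hc
      _ = max (v (g i) * c) (v (∑ j ∈ t, g j) * c) := max_mul_of_nonneg _ _ hc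

lemma na_sum_dom (hna : IsNonarchimedean ⇑v) {ι : Type*} {t : Finset ι} {g : ι → K}
    {i₀ : ι} (hi₀ : i₀ ∈ t) (h : ∀ j ∈ t, j ≠ i₀ → v (g j) < v (g i₀)) :
    v (∑ i ∈ t, g i) = v (g i₀) := by
  rw [← Finset.add_sum_erase t g hi₀]
  by_cases h0 : 0 < v (g i₀)
  · have hlt : v (∑ j ∈ t.erase i₀, g j) < v (g i₀) := by
      have := na_sum_lt hna (c := 1) (M := v (g i₀)) zero_le_one h0
        (fun j hj => by
          rw [mul_one]
          exact h j (Finset.mem_of_mem_erase hj) (Finset.ne_of_mem_erase hj))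
      simpa using this
    exact na_add_eq hna hlt
  · have hempty : t.erase i₀ = ∅ := by
      rw [Finset.eq_empty_iff_forall_notMem]
      intro j hj
      exact absurd (lt_of_lt_of_le (h j (Finset.mem_of_mem_erase hj)
        (Finset.ne_of_mem_erase hj)) (not_lt.mp h0)) (not_lt.mpr (v.nonneg _))
    rw [hempty]
    simp




/-- Outer factor, non-strict: all roots have absolute value `≥ r`. -/
lemma out_le (hna : IsNonarchimedean ⇑v) {r : ℝ} (hr : 0 < r) (s : Multiset K)
    (hs : ∀ z ∈ s, r ≤ v z) :
    v (((s.map fun z => (X : K[X]) - C z).prod).coeff 0) = (s.map ⇑v).prod ∧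
      ∀ j, v (((s.map fun z => (X : K[X]) - C z).prod).coeff j) * r ^ j ≤ (s.map ⇑v).prod := by
  induction s using Multiset.induction with
  | empty =>
    refine ⟨by simp, fun j => ?_⟩
    rcases Nat.eq_zero_or_pos j with hj | hj
    · subst hj; simp
    · rw [Multiset.map_zero, Multiset.prod_zero, Polynomial.coeff_one, if_neg (by omega)]
      simp [Multiset.map_zero]
  | cons z t ih =>
    have hz : r ≤ v z := hs z (Multiset.mem_cons_self _ _)
    obtain ⟨ih0, ihle⟩ := ih (fun w hw => hs w (Multiset.mem_cons_of_mem hw))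
    have hPt : (0:ℝ) < (t.map ⇑v).prod := by
      refine Multiset.prod_pos ?_
      intro x hx
      obtain ⟨w, hw, rfl⟩ := Multiset.mem_map.mp hx
      exact lt_of_lt_of_le hr (hs w (Multiset.mem_cons_of_mem hw))
    rw [Multiset.map_cons, Multiset.prod_cons, Multiset.map_cons, Multiset.prod_cons]
    set B := (t.map fun w => (X : K[X]) - C w).prod with hB
    have hc0 : (((X : K[X]) - C z) * B).coeff 0 = -z * B.coeff 0 := by
      rw [Polynomial.mul_coeff_zero]; congr 1; simp
    have h0 : v ((((X : K[X]) - C z) * B).coeff 0) = v z * (t.map ⇑v).prod := by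
      rw [hc0, v.map_mul, v.map_neg, ih0]
    refine ⟨h0, fun j => ?_⟩
    rcases Nat.eq_zero_or_pos j with hj | hj
    · subst hj; rw [pow_zero, mul_one, h0]
    · obtain ⟨k, rfl⟩ : ∃ k, j = k + 1 := ⟨j - 1, by omega⟩
      have hck : (((X : K[X]) - C z) * B).coeff (k + 1)
          = B.coeff k + -(z * B.coeff (k + 1)) := by
        rw [sub_mul, Polynomial.coeff_sub, Polynomial.coeff_X_mul, Polynomial.coeff_C_mul,
          sub_eq_add_neg]
      have hb : v ((((X : K[X]) - C z) * B).coeff (k + 1))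
          ≤ max (v (B.coeff k)) (v z * v (B.coeff (k + 1))) := by
        rw [hck]
        refine le_trans (hna _ _) ?_
        rw [v.map_neg, v.map_mul]
      have hr1 : (0:ℝ) ≤ r ^ (k + 1) := by positivity
      calc v ((((X : K[X]) - C z) * B).coeff (k + 1)) * r ^ (k + 1)
          ≤ max (v (B.coeff k) * r ^ (k + 1)) (v z * v (B.coeff (k + 1)) * r ^ (k + 1)) := by
            rw [← max_mul_of_nonneg _ _ hr1]
            exact mul_le_mul_of_nonneg_right hb hr1
        _ ≤ v z * (t.map ⇑v).prod := by
            refine max_le ?_ ?_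
            · have e1 : v (B.coeff k) * r ^ (k + 1) = v (B.coeff k) * r ^ k * r := by
                rw [pow_succ]; ring
              rw [e1]
              calc v (B.coeff k) * r ^ k * r ≤ (t.map ⇑v).prod * r :=
                    mul_le_mul_of_nonneg_right (ihle k) hr.le
                _ ≤ (t.map ⇑v).prod * v z := mul_le_mul_of_nonneg_left hz hPt.le
                _ = v z * (t.map ⇑v).prod := mul_comm _ _
            · rw [mul_assoc]
              exact mul_le_mul_of_nonneg_left (ihle (k + 1)) (v.nonneg z)

/-- Outer factor, strict: all roots have absolute value `> r`. -/
lemma out_lt (hna : IsNonarchimedean ⇑v) {r : ℝ} (hr : 0 < r) (s : Multiset K)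
    (hs : ∀ z ∈ s, r < v z) :
    ∀ j, 1 ≤ j →
      v (((s.map fun z => (X : K[X]) - C z).prod).coeff j) * r ^ j < (s.map ⇑v).prod := by
  induction s using Multiset.induction with
  | empty =>
    intro j hj
    rw [Multiset.map_zero, Multiset.prod_zero, Polynomial.coeff_one, if_neg (by omega)]
    simp [Multiset.map_zero]
  | cons z t ih =>
    intro j hj
    have hz : r < v z := hs z (Multiset.mem_cons_self _ _)
    have ht : ∀ w ∈ t, r < v w := fun w hw => hs w (Multiset.mem_cons_of_mem hw)
    obtain ⟨ih0, ihle⟩ := out_le hna hr t (fun w hw => (ht w hw).le)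
    have hPt : (0:ℝ) < (t.map ⇑v).prod := by
      refine Multiset.prod_pos ?_
      intro x hx
      obtain ⟨w, hw, rfl⟩ := Multiset.mem_map.mp hx
      exact lt_trans hr (ht w hw)
    rw [Multiset.map_cons, Multiset.prod_cons, Multiset.map_cons, Multiset.prod_cons]
    set B := (t.map fun w => (X : K[X]) - C w).prod with hB
    obtain ⟨k, rfl⟩ : ∃ k, j = k + 1 := ⟨j - 1, by omega⟩
    have hck : (((X : K[X]) - C z) * B).coeff (k + 1)
        = B.coeff k + -(z * B.coeff (k + 1)) := by
      rw [sub_mul, Polynomial.coeff_sub, Polynomial.coeff_X_mul, Polynomial.coeff_C_mul,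
        sub_eq_add_neg]
    have hb : v ((((X : K[X]) - C z) * B).coeff (k + 1))
        ≤ max (v (B.coeff k)) (v z * v (B.coeff (k + 1))) := by
      rw [hck]
      refine le_trans (hna _ _) ?_
      rw [v.map_neg, v.map_mul]
    have hr1 : (0:ℝ) ≤ r ^ (k + 1) := by positivity
    calc v ((((X : K[X]) - C z) * B).coeff (k + 1)) * r ^ (k + 1)
        ≤ max (v (B.coeff k) * r ^ (k + 1)) (v z * v (B.coeff (k + 1)) * r ^ (k + 1)) := by
          rw [← max_mul_of_nonneg _ _ hr1]
          exact mul_le_mul_of_nonneg_right hb hr1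
      _ < v z * (t.map ⇑v).prod := by
          refine max_lt ?_ ?_
          · have e1 : v (B.coeff k) * r ^ (k + 1) = v (B.coeff k) * r ^ k * r := by
              rw [pow_succ]; ring
            rw [e1]
            calc v (B.coeff k) * r ^ k * r ≤ (t.map ⇑v).prod * r :=
                  mul_le_mul_of_nonneg_right (ihle k) hr.le
              _ < (t.map ⇑v).prod * v z := (mul_lt_mul_iff_right₀ hPt).mpr hz
              _ = v z * (t.map ⇑v).prod := mul_comm _ _
          · rw [mul_assoc]
            exact (mul_lt_mul_iff_right₀ (lt_trans hr hz)).mpr (ih ht (k + 1) (by omega))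

/-- Inner factor, non-strict: all roots have absolute value `≤ r`. -/
lemma in_le (hna : IsNonarchimedean ⇑v) {r : ℝ} (hr : 0 < r) (s : Multiset K)
    (hs : ∀ z ∈ s, v z ≤ r) :
    ∀ k, v (((s.map fun z => (X : K[X]) - C z).prod).coeff k) * r ^ k
      ≤ r ^ (Multiset.card s) := by
  induction s using Multiset.induction with
  | empty =>
    intro k
    rcases Nat.eq_zero_or_pos k with hk | hk
    · subst hk; simp
    · rw [Multiset.map_zero, Multiset.prod_zero, Polynomial.coeff_one, if_neg (by omega)]
      simp
  | cons z t ih =>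
    intro k
    have hz : v z ≤ r := hs z (Multiset.mem_cons_self _ _)
    have ihle := ih (fun w hw => hs w (Multiset.mem_cons_of_mem hw))
    rw [Multiset.map_cons, Multiset.prod_cons, Multiset.card_cons]
    set B := (t.map fun w => (X : K[X]) - C w).prod with hB
    set ct := Multiset.card t with hct
    have hrct : (0:ℝ) < r ^ ct := by positivity
    rcases Nat.eq_zero_or_pos k with hk | hk
    · subst hk
      have hc0 : (((X : K[X]) - C z) * B).coeff 0 = -z * B.coeff 0 := by
        rw [Polynomial.mul_coeff_zero]; congr 1; simp
      have h1 := ihle 0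
      rw [pow_zero, mul_one] at h1
      rw [pow_zero, mul_one, hc0, v.map_mul, v.map_neg, pow_succ']
      exact mul_le_mul hz h1 (v.nonneg _) hr.le
    · obtain ⟨m, rfl⟩ : ∃ m, k = m + 1 := ⟨k - 1, by omega⟩
      have hck : (((X : K[X]) - C z) * B).coeff (m + 1)
          = B.coeff m + -(z * B.coeff (m + 1)) := by
        rw [sub_mul, Polynomial.coeff_sub, Polynomial.coeff_X_mul, Polynomial.coeff_C_mul,
          sub_eq_add_neg]
      have hb : v ((((X : K[X]) - C z) * B).coeff (m + 1))
          ≤ max (v (B.coeff m)) (v z * v (B.coeff (m + 1))) := by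
        rw [hck]
        refine le_trans (hna _ _) ?_
        rw [v.map_neg, v.map_mul]
      have hr1 : (0:ℝ) ≤ r ^ (m + 1) := by positivity
      calc v ((((X : K[X]) - C z) * B).coeff (m + 1)) * r ^ (m + 1)
          ≤ max (v (B.coeff m) * r ^ (m + 1)) (v z * v (B.coeff (m + 1)) * r ^ (m + 1)) := by
            rw [← max_mul_of_nonneg _ _ hr1]
            exact mul_le_mul_of_nonneg_right hb hr1
        _ ≤ r ^ (ct + 1) := by
            refine max_le ?_ ?_
            · have e1 : v (B.coeff m) * r ^ (m + 1) = v (B.coeff m) * r ^ m * r := by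
                rw [pow_succ]; ring
              rw [e1, pow_succ]
              exact mul_le_mul_of_nonneg_right (ihle m) hr.le
            · calc v z * v (B.coeff (m + 1)) * r ^ (m + 1)
                  = v z * (v (B.coeff (m + 1)) * r ^ (m + 1)) := by ring
                _ ≤ r * r ^ ct := mul_le_mul hz (ihle (m + 1))
                    (mul_nonneg (v.nonneg _) hr1) hr.le
                _ = r ^ (ct + 1) := (pow_succ' r ct).symm
    
/-- Inner factor, strict: all roots have absolute value `< r`. -/
lemma in_lt (hna : IsNonarchimedean ⇑v) {r : ℝ} (hr : 0 < r) (s : Multiset K)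
    (hs : ∀ z ∈ s, v z < r) :
    ∀ k, k < Multiset.card s →
      v (((s.map fun z => (X : K[X]) - C z).prod).coeff k) * r ^ k
        < r ^ (Multiset.card s) := by
  induction s using Multiset.induction with
  | empty => intro k hk; simp at hk
  | cons z t ih =>
    intro k hk
    have hz : v z < r := hs z (Multiset.mem_cons_self _ _)
    have ht : ∀ w ∈ t, v w < r := fun w hw => hs w (Multiset.mem_cons_of_mem hw)
    have ihle := in_le hna hr t (fun w hw => (ht w hw).le)
    rw [Multiset.map_cons, Multiset.prod_cons, Multiset.card_cons]
    rw [Multiset.card_cons] at hk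
    set B := (t.map fun w => (X : K[X]) - C w).prod with hB
    set ct := Multiset.card t with hct
    have hrct : (0:ℝ) < r ^ ct := by positivity
    rcases Nat.eq_zero_or_pos k with hk0 | hk0
    · subst hk0
      have hc0 : (((X : K[X]) - C z) * B).coeff 0 = -z * B.coeff 0 := by
        rw [Polynomial.mul_coeff_zero]; congr 1; simp
      have h1 := ihle 0
      rw [pow_zero, mul_one] at h1
      rw [pow_zero, mul_one, hc0, v.map_mul, v.map_neg, pow_succ']
      calc v z * v (B.coeff 0) ≤ v z * r ^ ct :=
            mul_le_mul_of_nonneg_left h1 (v.nonneg z)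
        _ < r * r ^ ct := (mul_lt_mul_iff_left₀ hrct).mpr hz
    · obtain ⟨m, rfl⟩ : ∃ m, k = m + 1 := ⟨k - 1, by omega⟩
      have hm : m < ct := by omega
      have hck : (((X : K[X]) - C z) * B).coeff (m + 1)
          = B.coeff m + -(z * B.coeff (m + 1)) := by
        rw [sub_mul, Polynomial.coeff_sub, Polynomial.coeff_X_mul, Polynomial.coeff_C_mul,
          sub_eq_add_neg]
      have hb : v ((((X : K[X]) - C z) * B).coeff (m + 1))
          ≤ max (v (B.coeff m)) (v z * v (B.coeff (m + 1))) := by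
        rw [hck]
        refine le_trans (hna _ _) ?_
        rw [v.map_neg, v.map_mul]
      have hr1 : (0:ℝ) ≤ r ^ (m + 1) := by positivity
      calc v ((((X : K[X]) - C z) * B).coeff (m + 1)) * r ^ (m + 1)
          ≤ max (v (B.coeff m) * r ^ (m + 1)) (v z * v (B.coeff (m + 1)) * r ^ (m + 1)) := by
            rw [← max_mul_of_nonneg _ _ hr1]
            exact mul_le_mul_of_nonneg_right hb hr1
        _ < r ^ (ct + 1) := by
            refine max_lt ?_ ?_
            · have e1 : v (B.coeff m) * r ^ (m + 1) = v (B.coeff m) * r ^ m * r := by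
                rw [pow_succ]; ring
              rw [e1, pow_succ]
              exact (mul_lt_mul_iff_left₀ hr).mpr (ih ht m hm)
            · calc v z * v (B.coeff (m + 1)) * r ^ (m + 1)
                  = v z * (v (B.coeff (m + 1)) * r ^ (m + 1)) := by ring
                _ ≤ v z * r ^ ct := mul_le_mul_of_nonneg_left (ihle (m + 1)) (v.nonneg z)
                _ < r * r ^ ct := (mul_lt_mul_iff_left₀ hrct).mpr hz
                _ = r ^ (ct + 1) := (pow_succ' r ct).symm




/-- Core counting lemma, closed-disk version. -/
lemma core_closed [IsAlgClosed K] (hna : IsNonarchimedean ⇑v) {r : ℝ} (hr : 0 < r)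
    {p : K[X]} (hp : p ≠ 0) {N : ℕ}
    (hN : N = Multiset.card (p.roots.filter fun z => v z ≤ r)) :
    (∀ i, v (p.coeff i) * r ^ i ≤ v (p.coeff N) * r ^ N) ∧
      (∀ i, N < i → v (p.coeff i) * r ^ i < v (p.coeff N) * r ^ N) ∧ p.coeff N ≠ 0 := by
  have hsplit : Multiset.card p.roots = p.natDegree :=
    splits_iff_card_roots.mp (IsAlgClosed.splits p)
  have hfac := C_leadingCoeff_mul_prod_multiset_X_sub_C hsplit
  set sin := p.roots.filter (fun z => v z ≤ r) with hsin
  set sout := p.roots.filter (fun z => ¬ v z ≤ r) with hsout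
  have hroots : sin + sout = p.roots := Multiset.filter_add_not _ _
  set B := (sin.map fun z => (X : K[X]) - C z).prod with hBdef
  set A := (sout.map fun z => (X : K[X]) - C z).prod with hAdef
  have hfac2 : p = C p.leadingCoeff * (B * A) := by
    conv_lhs => rw [← hfac, ← hroots]
    rw [Multiset.map_add, Multiset.prod_add]
  have hout : ∀ z ∈ sout, r < v z := fun z hz =>
    not_le.mp (Multiset.mem_filter.mp hz).2
  have hin : ∀ z ∈ sin, v z ≤ r := fun z hz => (Multiset.mem_filter.mp hz).2
  set P := (sout.map ⇑v).prod with hPdef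
  have hP : 0 < P := by
    refine Multiset.prod_pos ?_
    intro x hx
    obtain ⟨w, hw, rfl⟩ := Multiset.mem_map.mp hx
    exact lt_trans hr (hout w hw)
  have hlead : 0 < v p.leadingCoeff := v.pos (leadingCoeff_ne_zero.mpr hp)
  obtain ⟨hA0, hAle⟩ := out_le hna hr sout (fun z hz => (hout z hz).le)
  have hAlt := out_lt hna hr sout hout
  have hBle := in_le hna hr sin hin
  have hcard : Multiset.card sin = N := hN.symm
  have hBmonic : B.Monic := monic_multiset_prod_of_monic _ _ (fun z _ => monic_X_sub_C z)
  have hBdeg : B.natDegree = N := by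
    rw [hBdef, natDegree_multiset_prod_X_sub_C_eq_card, hcard]
  have hBN : B.coeff N = 1 := by
    rw [← hBdeg]; exact hBmonic.coeff_natDegree
  have hBzero : ∀ j, N < j → B.coeff j = 0 := fun j hj =>
    coeff_eq_zero_of_natDegree_lt (by omega)
  rw [hcard] at hBle
  have hcoeff : ∀ i, p.coeff i
      = p.leadingCoeff * ∑ x ∈ Finset.HasAntidiagonal.antidiagonal i, B.coeff x.1 * A.coeff x.2 := by
    intro i
    conv_lhs => rw [hfac2]
    rw [coeff_C_mul, coeff_mul]
  have hterm_le : ∀ i, ∀ x ∈ Finset.HasAntidiagonal.antidiagonal i,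
      v (B.coeff x.1 * A.coeff x.2) * r ^ i ≤ r ^ N * P := by
    rintro i ⟨j, k⟩ hx
    have hik : j + k = i := Finset.HasAntidiagonal.mem_antidiagonal.mp hx
    have e1 : v (B.coeff j * A.coeff k) * r ^ i
        = (v (B.coeff j) * r ^ j) * (v (A.coeff k) * r ^ k) := by
      rw [v.map_mul, ← hik, pow_add]; ring
    rw [e1]
    exact mul_le_mul (hBle j) (hAle k)
      (mul_nonneg (v.nonneg _) (by positivity)) (by positivity)
  have hterm_lt : ∀ i, N < i → ∀ x ∈ Finset.HasAntidiagonal.antidiagonal i,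
      v (B.coeff x.1 * A.coeff x.2) * r ^ i < r ^ N * P := by
    rintro i hi ⟨j, k⟩ hx
    have hik : j + k = i := Finset.HasAntidiagonal.mem_antidiagonal.mp hx
    by_cases hj : N < j
    · rw [hBzero j hj, zero_mul, v.map_zero, zero_mul]
      positivity
    · have hk : 1 ≤ k := by omega
      have e1 : v (B.coeff j * A.coeff k) * r ^ i
          = (v (B.coeff j) * r ^ j) * (v (A.coeff k) * r ^ k) := by
        rw [v.map_mul, ← hik, pow_add]; ring
      rw [e1]
      calc (v (B.coeff j) * r ^ j) * (v (A.coeff k) * r ^ k)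
          ≤ r ^ N * (v (A.coeff k) * r ^ k) :=
            mul_le_mul_of_nonneg_right (hBle j)
              (mul_nonneg (v.nonneg _) (by positivity))
        _ < r ^ N * P := (mul_lt_mul_iff_right₀ (by positivity)).mpr (hAlt k hk)
  have hBNA0 : v (B.coeff N * A.coeff 0) = P := by
    rw [hBN, one_mul, hA0]
  have hdom : v (∑ x ∈ Finset.HasAntidiagonal.antidiagonal N, B.coeff x.1 * A.coeff x.2)
      = v (B.coeff N * A.coeff 0) := by
    refine na_sum_dom hna (i₀ := (N, 0)) (Finset.HasAntidiagonal.mem_antidiagonal.mpr (by simp)) ?_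
    rintro ⟨j, k⟩ hx hne
    have hik : j + k = N := Finset.HasAntidiagonal.mem_antidiagonal.mp hx
    have hk : 1 ≤ k := by
      rcases Nat.eq_zero_or_pos k with h | h
      · exfalso; apply hne; subst h; simp only [Nat.add_zero] at hik; simp [hik]
      · exact h
    rw [hBNA0]
    have e1 : v (B.coeff j * A.coeff k) * r ^ N
        = (v (B.coeff j) * r ^ j) * (v (A.coeff k) * r ^ k) := by
      rw [v.map_mul, ← hik, pow_add]; ring
    have h1 : v (B.coeff j * A.coeff k) * r ^ N < r ^ N * P := by
      rw [e1]
      calc (v (B.coeff j) * r ^ j) * (v (A.coeff k) * r ^ k)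
          ≤ r ^ N * (v (A.coeff k) * r ^ k) :=
            mul_le_mul_of_nonneg_right (hBle j)
              (mul_nonneg (v.nonneg _) (by positivity))
        _ < r ^ N * P := (mul_lt_mul_iff_right₀ (by positivity)).mpr (hAlt k hk)
    nlinarith [pow_pos hr N, v.nonneg (B.coeff j * A.coeff k)]
  have hsum_le : ∀ i, v (∑ x ∈ Finset.HasAntidiagonal.antidiagonal i, B.coeff x.1 * A.coeff x.2) * r ^ i
      ≤ r ^ N * P :=
    fun i => na_sum_le hna (by positivity) (by positivity) (hterm_le i)
  have hcoeffN : v (p.coeff N) = v p.leadingCoeff * P := by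
    rw [hcoeff N, v.map_mul, hdom, hBNA0]
  have hkey : v (p.coeff N) * r ^ N = v p.leadingCoeff * (r ^ N * P) := by
    rw [hcoeffN]; ring
  refine ⟨?_, ?_, ?_⟩
  · intro i
    rw [hcoeff i, v.map_mul, hkey]
    calc v p.leadingCoeff * v (∑ x ∈ Finset.HasAntidiagonal.antidiagonal i, B.coeff x.1 * A.coeff x.2) * r ^ i
        = v p.leadingCoeff
          * (v (∑ x ∈ Finset.HasAntidiagonal.antidiagonal i, B.coeff x.1 * A.coeff x.2) * r ^ i) := by ring
      _ ≤ v p.leadingCoeff * (r ^ N * P) :=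
          mul_le_mul_of_nonneg_left (hsum_le i) (v.nonneg _)
  · intro i hi
    rw [hcoeff i, v.map_mul, hkey]
    have hlt := na_sum_lt hna (c := r ^ i) (by positivity) (by positivity) (hterm_lt i hi)
    calc v p.leadingCoeff * v (∑ x ∈ Finset.HasAntidiagonal.antidiagonal i, B.coeff x.1 * A.coeff x.2) * r ^ i
        = v p.leadingCoeff
          * (v (∑ x ∈ Finset.HasAntidiagonal.antidiagonal i, B.coeff x.1 * A.coeff x.2) * r ^ i) := by ring
      _ < v p.leadingCoeff * (r ^ N * P) := (mul_lt_mul_iff_right₀ hlead).mpr hlt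
  · rw [← v.ne_zero_iff, hcoeffN]
    exact (mul_pos hlead hP).ne'

/-- Core counting lemma, open-disk version. -/
lemma core_open [IsAlgClosed K] (hna : IsNonarchimedean ⇑v) {r : ℝ} (hr : 0 < r)
    {p : K[X]} (hp : p ≠ 0) {N : ℕ}
    (hN : N = Multiset.card (p.roots.filter fun z => v z < r)) :
    (∀ i, v (p.coeff i) * r ^ i ≤ v (p.coeff N) * r ^ N) ∧
      (∀ i, i < N → v (p.coeff i) * r ^ i < v (p.coeff N) * r ^ N) ∧ p.coeff N ≠ 0 := by
  have hsplit : Multiset.card p.roots = p.natDegree :=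
    splits_iff_card_roots.mp (IsAlgClosed.splits p)
  have hfac := C_leadingCoeff_mul_prod_multiset_X_sub_C hsplit
  set sin := p.roots.filter (fun z => v z < r) with hsin
  set sout := p.roots.filter (fun z => ¬ v z < r) with hsout
  have hroots : sin + sout = p.roots := Multiset.filter_add_not _ _
  set B := (sin.map fun z => (X : K[X]) - C z).prod with hBdef
  set A := (sout.map fun z => (X : K[X]) - C z).prod with hAdef
  have hfac2 : p = C p.leadingCoeff * (B * A) := by
    conv_lhs => rw [← hfac, ← hroots]
    rw [Multiset.map_add, Multiset.prod_add]
  have hout : ∀ z ∈ sout, r ≤ v z := fun z hz =>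
    not_lt.mp ((Multiset.mem_filter.mp hz).2)
  have hin : ∀ z ∈ sin, v z < r := fun z hz => (Multiset.mem_filter.mp hz).2
  set P := (sout.map ⇑v).prod with hPdef
  have hP : 0 < P := by
    refine Multiset.prod_pos ?_
    intro x hx
    obtain ⟨w, hw, rfl⟩ := Multiset.mem_map.mp hx
    exact lt_of_lt_of_le hr (hout w hw)
  have hlead : 0 < v p.leadingCoeff := v.pos (leadingCoeff_ne_zero.mpr hp)
  obtain ⟨hA0, hAle⟩ := out_le hna hr sout hout
  have hBle := in_le hna hr sin (fun z hz => (hin z hz).le)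
  have hBlt := in_lt hna hr sin hin
  have hcard : Multiset.card sin = N := hN.symm
  have hBmonic : B.Monic := monic_multiset_prod_of_monic _ _ (fun z _ => monic_X_sub_C z)
  have hBdeg : B.natDegree = N := by
    rw [hBdef, natDegree_multiset_prod_X_sub_C_eq_card, hcard]
  have hBN : B.coeff N = 1 := by
    rw [← hBdeg]; exact hBmonic.coeff_natDegree
  rw [hcard] at hBle hBlt
  have hcoeff : ∀ i, p.coeff i
      = p.leadingCoeff * ∑ x ∈ Finset.HasAntidiagonal.antidiagonal i, B.coeff x.1 * A.coeff x.2 := by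
    intro i
    conv_lhs => rw [hfac2]
    rw [coeff_C_mul, coeff_mul]
  have hterm_le : ∀ i, ∀ x ∈ Finset.HasAntidiagonal.antidiagonal i,
      v (B.coeff x.1 * A.coeff x.2) * r ^ i ≤ r ^ N * P := by
    rintro i ⟨j, k⟩ hx
    have hik : j + k = i := Finset.HasAntidiagonal.mem_antidiagonal.mp hx
    have e1 : v (B.coeff j * A.coeff k) * r ^ i
        = (v (B.coeff j) * r ^ j) * (v (A.coeff k) * r ^ k) := by
      rw [v.map_mul, ← hik, pow_add]; ring
    rw [e1]
    exact mul_le_mul (hBle j) (hAle k)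
      (mul_nonneg (v.nonneg _) (by positivity)) (by positivity)
  have hterm_lt : ∀ i, i < N → ∀ x ∈ Finset.HasAntidiagonal.antidiagonal i,
      v (B.coeff x.1 * A.coeff x.2) * r ^ i < r ^ N * P := by
    rintro i hi ⟨j, k⟩ hx
    have hik : j + k = i := Finset.HasAntidiagonal.mem_antidiagonal.mp hx
    have hj : j < N := by omega
    have e1 : v (B.coeff j * A.coeff k) * r ^ i
        = (v (B.coeff j) * r ^ j) * (v (A.coeff k) * r ^ k) := by
      rw [v.map_mul, ← hik, pow_add]; ring
    rw [e1]
    calc (v (B.coeff j) * r ^ j) * (v (A.coeff k) * r ^ k)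
        ≤ (v (B.coeff j) * r ^ j) * P :=
          mul_le_mul_of_nonneg_left (hAle k)
            (mul_nonneg (v.nonneg _) (by positivity))
      _ < r ^ N * P := (mul_lt_mul_iff_left₀ hP).mpr (hBlt j hj)
  have hBNA0 : v (B.coeff N * A.coeff 0) = P := by
    rw [hBN, one_mul, hA0]
  have hdom : v (∑ x ∈ Finset.HasAntidiagonal.antidiagonal N, B.coeff x.1 * A.coeff x.2)
      = v (B.coeff N * A.coeff 0) := by
    refine na_sum_dom hna (i₀ := (N, 0)) (Finset.HasAntidiagonal.mem_antidiagonal.mpr (by simp)) ?_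
    rintro ⟨j, k⟩ hx hne
    have hik : j + k = N := Finset.HasAntidiagonal.mem_antidiagonal.mp hx
    have hj : j < N := by
      rcases Nat.lt_or_ge j N with h | h
      · exact h
      · exfalso; apply hne
        have : j = N := by omega
        subst this
        have : k = 0 := by omega
        simp [this]
    rw [hBNA0]
    have e1 : v (B.coeff j * A.coeff k) * r ^ N
        = (v (B.coeff j) * r ^ j) * (v (A.coeff k) * r ^ k) := by
      rw [v.map_mul, ← hik, pow_add]; ring
    have h1 : v (B.coeff j * A.coeff k) * r ^ N < r ^ N * P := by
      rw [e1]
      calc (v (B.coeff j) * r ^ j) * (v (A.coeff k) * r ^ k)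
          ≤ (v (B.coeff j) * r ^ j) * P :=
            mul_le_mul_of_nonneg_left (hAle k)
              (mul_nonneg (v.nonneg _) (by positivity))
        _ < r ^ N * P := (mul_lt_mul_iff_left₀ hP).mpr (hBlt j hj)
    nlinarith [pow_pos hr N, v.nonneg (B.coeff j * A.coeff k)]
  have hsum_le : ∀ i, v (∑ x ∈ Finset.HasAntidiagonal.antidiagonal i, B.coeff x.1 * A.coeff x.2) * r ^ i
      ≤ r ^ N * P :=
    fun i => na_sum_le hna (by positivity) (by positivity) (hterm_le i)
  have hcoeffN : v (p.coeff N) = v p.leadingCoeff * P := by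
    rw [hcoeff N, v.map_mul, hdom, hBNA0]
  have hkey : v (p.coeff N) * r ^ N = v p.leadingCoeff * (r ^ N * P) := by
    rw [hcoeffN]; ring
  refine ⟨?_, ?_, ?_⟩
  · intro i
    rw [hcoeff i, v.map_mul, hkey]
    calc v p.leadingCoeff * v (∑ x ∈ Finset.HasAntidiagonal.antidiagonal i, B.coeff x.1 * A.coeff x.2) * r ^ i
        = v p.leadingCoeff
          * (v (∑ x ∈ Finset.HasAntidiagonal.antidiagonal i, B.coeff x.1 * A.coeff x.2) * r ^ i) := by ring
      _ ≤ v p.leadingCoeff * (r ^ N * P) :=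
          mul_le_mul_of_nonneg_left (hsum_le i) (v.nonneg _)
  · intro i hi
    rw [hcoeff i, v.map_mul, hkey]
    have hlt := na_sum_lt hna (c := r ^ i) (by positivity) (by positivity) (hterm_lt i hi)
    calc v p.leadingCoeff * v (∑ x ∈ Finset.HasAntidiagonal.antidiagonal i, B.coeff x.1 * A.coeff x.2) * r ^ i
        = v p.leadingCoeff
          * (v (∑ x ∈ Finset.HasAntidiagonal.antidiagonal i, B.coeff x.1 * A.coeff x.2) * r ^ i) := by ring
      _ < v p.leadingCoeff * (r ^ N * P) := (mul_lt_mul_iff_right₀ hlead).mpr hlt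
  · rw [← v.ne_zero_iff, hcoeffN]
    exact (mul_pos hlead hP).ne'


lemma roots_comp_X_add_C [IsAlgClosed K] (p : K[X]) (a : K) :
    (p.comp (X + C a)).roots = p.roots.map (fun z => z - a) := by
  by_cases hp : p = 0
  · simp [hp]
  have hsplit : Multiset.card p.roots = p.natDegree :=
    splits_iff_card_roots.mp (IsAlgClosed.splits p)
  have hfac := C_leadingCoeff_mul_prod_multiset_X_sub_C hsplit
  conv_lhs => rw [← hfac]
  rw [mul_comp, C_comp, multiset_prod_comp, Multiset.map_map]
  have hmap : p.roots.map ((fun q : K[X] => q.comp (X + C a)) ∘ fun z => X - C z)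
      = (p.roots.map (fun z => z - a)).map (fun w => (X : K[X]) - C w) := by
    rw [Multiset.map_map]
    refine Multiset.map_congr rfl ?_
    intro z _
    simp only [Function.comp_apply, sub_comp, X_comp, C_comp]
    rw [C_sub]
    ring
  rw [hmap, roots_C_mul _ (leadingCoeff_ne_zero.mpr hp), roots_multiset_prod_X_sub_C]

lemma comp_X_add_C_ne_zero' {p : K[X]} (hp : p ≠ 0) (a : K) : p.comp (X + C a) ≠ 0 := by
  intro h
  apply hp
  have h2 : (p.comp (X + C a)).comp (X - C a) = p := by
    rw [comp_assoc]
    have : ((X + C a).comp (X - C a) : K[X]) = X := by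
      rw [add_comp, X_comp, C_comp]
      ring
    rw [this, comp_X]
  rw [h, zero_comp] at h2
  exact h2.symm


end RHAux

theorem stmt_9 {K : Type*} [Field K] [IsAlgClosed K]
    (v : AbsoluteValue K ℝ) (hna : IsNonarchimedean ⇑v)
    (f : K[X]) (U V : Set K) (r s : ℝ)
    (hU : IsDiskOfRadius v U r) (hV : IsDiskOfRadius v V s)
    (e : ℕ) (he : 1 ≤ e)
    (hres : ∀ n : ℕ, 1 ≤ n → n ≤ e → v (n : K) = 1)
    (hmaps : Set.MapsTo (fun z => f.eval z) U V)
    (hdeg : ∀ y ∈ V, mapDegreeOn f U y = e) :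
    e = Multiset.card (Multiset.filter (· ∈ U) ((derivative f).roots)) + 1 := by
  obtain ⟨hr, a, hUball⟩ := hU
  obtain ⟨hs, b, hVball⟩ := hV
  have hbV : b ∈ V := by
    rcases hVball with h | h <;> rw [h] <;> simp [hs, hs.le]
  have hcount := hdeg b hbV
  unfold mapDegreeOn at hcount
  set g : K[X] := f - C b with hgdef
  have hg0 : g ≠ 0 := by
    intro h
    rw [h] at hcount
    simp at hcount
    omega
  set G := g.comp (X + C a) with hGdef
  have hG0 : G ≠ 0 := comp_X_add_C_ne_zero' hg0 a
  have hGroots : G.roots = g.roots.map (fun z => z - a) := roots_comp_X_add_C g a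
  have hD : derivative G = (derivative f).comp (X + C a) := by
    have h1 : derivative ((X : K[X]) + C a) = 1 := by simp
    have h2 : derivative g = derivative f := by rw [hgdef]; simp
    rw [hGdef, derivative_comp, h1, h2, one_mul]
  have he1 : (e - 1) + 1 = e := by omega
  have hcast : ∀ j : ℕ, ((j : K) + 1) = ((j + 1 : ℕ) : K) := by
    intro j; push_cast; ring
  have hve : v (((e - 1 : ℕ) : K) + 1) = 1 := by
    rw [hcast, he1]; exact hres e he le_rfl
  have hφ : ∀ j, v ((derivative G).coeff j)
      = v (G.coeff (j + 1)) * v (((j + 1 : ℕ) : K)) := by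
    intro j
    rw [coeff_derivative, v.map_mul, hcast]
  -- the two disk cases
  rcases hUball with hU1 | hU1
  · -- open disk
    have hcountG : e = Multiset.card (G.roots.filter fun w => v w < r) := by
      rw [hGroots, Multiset.filter_map, Multiset.card_map, ← hcount, hU1]
      exact (congrArg Multiset.card
        (Multiset.filter_congr (fun x _ => by simp [Set.mem_setOf_eq]))).symm
    obtain ⟨hA1, hA2, hA3⟩ := core_open hna hr hG0 hcountG
    have hDcoeff_ne : (derivative G).coeff (e - 1) ≠ 0 := by
      rw [coeff_derivative, he1]
      refine mul_ne_zero hA3 ?_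
      intro h
      rw [show ((e - 1 : ℕ) : K) + 1 = 0 from h] at hve
      simpa using hve
    have hDG0 : derivative G ≠ 0 := by
      intro h
      exact hDcoeff_ne (by rw [h]; simp)
    obtain ⟨hB1, hB2, hB3⟩ := core_open hna hr hDG0 rfl
    set N' := Multiset.card ((derivative G).roots.filter fun w => v w < r) with hN'def
    have hΦe : v ((derivative G).coeff (e - 1)) * r ^ (e - 1) * r
        = v (G.coeff e) * r ^ e := by
      rw [hφ (e - 1), he1, hres e he le_rfl, mul_one, mul_assoc, ← pow_succ, he1]
    have hΦle : ∀ j, v ((derivative G).coeff j) * r ^ j * r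
        ≤ v (G.coeff e) * r ^ e := by
      intro j
      calc v ((derivative G).coeff j) * r ^ j * r
          = v (G.coeff (j + 1)) * v (((j + 1 : ℕ) : K)) * r ^ (j + 1) := by
            rw [hφ j, pow_succ]; ring
        _ ≤ v (G.coeff (j + 1)) * 1 * r ^ (j + 1) := by
            refine mul_le_mul_of_nonneg_right
              (mul_le_mul_of_nonneg_left (na_natCast_le_one hna (j + 1)) (v.nonneg _))
              (by positivity)
        _ = v (G.coeff (j + 1)) * r ^ (j + 1) := by ring
        _ ≤ v (G.coeff e) * r ^ e := hA1 (j + 1)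
    have hΦlt : ∀ j, j < e - 1 → v ((derivative G).coeff j) * r ^ j * r
        < v (G.coeff e) * r ^ e := by
      intro j hj
      calc v ((derivative G).coeff j) * r ^ j * r
          = v (G.coeff (j + 1)) * v (((j + 1 : ℕ) : K)) * r ^ (j + 1) := by
            rw [hφ j, pow_succ]; ring
        _ ≤ v (G.coeff (j + 1)) * 1 * r ^ (j + 1) := by
            refine mul_le_mul_of_nonneg_right
              (mul_le_mul_of_nonneg_left (na_natCast_le_one hna (j + 1)) (v.nonneg _))
              (by positivity)
        _ = v (G.coeff (j + 1)) * r ^ (j + 1) := by ring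
        _ < v (G.coeff e) * r ^ e := hA2 (j + 1) (by omega)
    have hC1 : ∀ j, v ((derivative G).coeff j) * r ^ j
        ≤ v ((derivative G).coeff (e - 1)) * r ^ (e - 1) := by
      intro j
      have := (hΦle j).trans_eq hΦe.symm
      exact le_of_mul_le_mul_right this hr
    have hC2 : ∀ j, j < e - 1 → v ((derivative G).coeff j) * r ^ j
        < v ((derivative G).coeff (e - 1)) * r ^ (e - 1) := by
      intro j hj
      have := (hΦlt j hj).trans_eq hΦe.symm
      exact lt_of_mul_lt_mul_right this hr.le
    have hN'e : N' = e - 1 := by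
      by_contra hne
      rcases Nat.lt_or_ge N' (e - 1) with h | h
      · have h1 := hB1 (e - 1)
        have h2 := hC2 N' h
        linarith
      · have h' : e - 1 < N' := by omega
        have h1 := hB2 (e - 1) h'
        have h2 := hC1 N'
        linarith
    have htrans : N' = Multiset.card (Multiset.filter (· ∈ U) (derivative f).roots) := by
      rw [hN'def, hD, roots_comp_X_add_C, Multiset.filter_map, Multiset.card_map, hU1]
      exact congrArg Multiset.card
        (Multiset.filter_congr (fun x _ => by simp [Set.mem_setOf_eq]))
    omega
  · -- closed disk
    have hcountG : e = Multiset.card (G.roots.filter fun w => v w ≤ r) := by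
      rw [hGroots, Multiset.filter_map, Multiset.card_map, ← hcount, hU1]
      exact (congrArg Multiset.card
        (Multiset.filter_congr (fun x _ => by simp [Set.mem_setOf_eq]))).symm
    obtain ⟨hA1, hA2, hA3⟩ := core_closed hna hr hG0 hcountG
    have hDcoeff_ne : (derivative G).coeff (e - 1) ≠ 0 := by
      rw [coeff_derivative, he1]
      refine mul_ne_zero hA3 ?_
      intro h
      rw [show ((e - 1 : ℕ) : K) + 1 = 0 from h] at hve
      simpa using hve
    have hDG0 : derivative G ≠ 0 := by
      intro h
      exact hDcoeff_ne (by rw [h]; simp)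
    obtain ⟨hB1, hB2, hB3⟩ := core_closed hna hr hDG0 rfl
    set N' := Multiset.card ((derivative G).roots.filter fun w => v w ≤ r) with hN'def
    have hΦe : v ((derivative G).coeff (e - 1)) * r ^ (e - 1) * r
        = v (G.coeff e) * r ^ e := by
      rw [hφ (e - 1), he1, hres e he le_rfl, mul_one, mul_assoc, ← pow_succ, he1]
    have hΦle : ∀ j, v ((derivative G).coeff j) * r ^ j * r
        ≤ v (G.coeff e) * r ^ e := by
      intro j
      calc v ((derivative G).coeff j) * r ^ j * r
          = v (G.coeff (j + 1)) * v (((j + 1 : ℕ) : K)) * r ^ (j + 1) := by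
            rw [hφ j, pow_succ]; ring
        _ ≤ v (G.coeff (j + 1)) * 1 * r ^ (j + 1) := by
            refine mul_le_mul_of_nonneg_right
              (mul_le_mul_of_nonneg_left (na_natCast_le_one hna (j + 1)) (v.nonneg _))
              (by positivity)
        _ = v (G.coeff (j + 1)) * r ^ (j + 1) := by ring
        _ ≤ v (G.coeff e) * r ^ e := hA1 (j + 1)
    have hΦlt : ∀ j, e - 1 < j → v ((derivative G).coeff j) * r ^ j * r
        < v (G.coeff e) * r ^ e := by
      intro j hj
      calc v ((derivative G).coeff j) * r ^ j * r
          = v (G.coeff (j + 1)) * v (((j + 1 : ℕ) : K)) * r ^ (j + 1) := by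
            rw [hφ j, pow_succ]; ring
        _ ≤ v (G.coeff (j + 1)) * 1 * r ^ (j + 1) := by
            refine mul_le_mul_of_nonneg_right
              (mul_le_mul_of_nonneg_left (na_natCast_le_one hna (j + 1)) (v.nonneg _))
              (by positivity)
        _ = v (G.coeff (j + 1)) * r ^ (j + 1) := by ring
        _ < v (G.coeff e) * r ^ e := hA2 (j + 1) (by omega)
    have hC1 : ∀ j, v ((derivative G).coeff j) * r ^ j
        ≤ v ((derivative G).coeff (e - 1)) * r ^ (e - 1) := by
      intro j
      have := (hΦle j).trans_eq hΦe.symm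
      exact le_of_mul_le_mul_right this hr
    have hC2 : ∀ j, e - 1 < j → v ((derivative G).coeff j) * r ^ j
        < v ((derivative G).coeff (e - 1)) * r ^ (e - 1) := by
      intro j hj
      have := (hΦlt j hj).trans_eq hΦe.symm
      exact lt_of_mul_lt_mul_right this hr.le
    have hN'e : N' = e - 1 := by
      by_contra hne
      rcases Nat.lt_or_ge N' (e - 1) with h | h
      · have h1 := hB2 (e - 1) h
        have h2 := hC1 N'
        linarith
      · have h' : e - 1 < N' := by omega
        have h1 := hC2 N' h'
        have h2 := hB1 (e - 1)
        linarith
    have htrans : N' = Multiset.card (Multiset.filter (· ∈ U) (derivative f).roots) := by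
      rw [hN'def, hD, roots_comp_X_add_C, Multiset.filter_map, Multiset.card_map, hU1]
      exact congrArg Multiset.card
        (Multiset.filter_congr (fun x _ => by simp [Set.mem_setOf_eq]))
    omega
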